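/- For every positive integer n there exists a constant ε = ε(n) > 0 with the following property: if α is an algebraic integer of degree n over ℚ such that every Galois conjugate α' of α (i.e., every complex root of the minimal polynomial of α over ℚ) satisfies 1 − ε < |α'| < 1 + ε, then α is a root of unity. -/

import Mathlib

open Polynomial Set

/-- Finiteness: algebraic integers in ℂ of degree ≤ n whose minpoly roots are all ≤ 2. -/
lemma finS (n : ℕ) :
    {α : ℂ | IsIntegral ℤ α ∧ (minpoly ℚ α).natDegree ≤ n ∧
      ∀ β : ℂ, Polynomial.aeval β (minpoly ℚ α) = 0 → ‖β‖ ≤ 2}.Finite := by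
  classical
  set C : ℤ := Int.ofNat (Nat.ceil ((max (2:ℝ) 1) ^ n * (n.choose (n / 2) : ℝ))) with hC
  have := Polynomial.bUnion_roots_finite (algebraMap ℤ ℂ) n (Set.finite_Icc (-C : ℤ) C)
  refine this.subset fun α hα => ?_
  obtain ⟨hint, hdeg, hroots⟩ := hα
  simp_rw [mem_iUnion]
  have h_map_ℚ := minpoly.isIntegrallyClosed_eq_field_fractions' ℚ hint
  have hQint : IsIntegral ℚ α := hint.tower_top
  refine ⟨minpoly ℤ α, ⟨?_, fun i => ?_⟩, ?_⟩
  · rw [← (minpoly.monic hint).natDegree_map (algebraMap ℤ ℚ), ← h_map_ℚ]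
    exact hdeg
  · have hb : ∀ z ∈ ((minpoly ℚ α).map (algebraMap ℚ ℂ)).roots, ‖z‖ ≤ 2 := by
      intro z hz
      have := (Polynomial.mem_roots_map_of_injective
        (algebraMap ℚ ℂ).injective (minpoly.ne_zero hQint)).1 hz
      exact hroots z (by rwa [Polynomial.aeval_def])
    have hcb := Polynomial.coeff_bdd_of_roots_le (algebraMap ℚ ℂ) (minpoly.monic hQint)
      (IsAlgClosed.splits _) (le_trans (le_of_eq rfl) hdeg) hb i
    rw [mem_Icc, ← abs_le, ← @Int.cast_le ℝ]
    refine (Eq.trans_le ?_ hcb).trans (Nat.le_ceil _)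
    rw [h_map_ℚ, Polynomial.map_map, Polynomial.coeff_map]
    have : (algebraMap ℚ ℂ).comp (algebraMap ℤ ℚ) = algebraMap ℤ ℂ := by
      ext <;> simp
    rw [this]
    simp [Complex.norm_intCast]
  · rw [Finset.mem_coe, Multiset.mem_toFinset, Polynomial.mem_roots]
    · rw [Polynomial.IsRoot, Polynomial.eval_map, ← Polynomial.aeval_def, minpoly.aeval]
    · exact Polynomial.map_monic_ne_zero (minpoly.monic hint)

/-- Kronecker: algebraic integer in ℂ with all minpoly roots of absolute value 1
is a root of unity. -/
lemma kron (α : ℂ) (hint : IsIntegral ℤ α)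
    (h : ∀ β : ℂ, Polynomial.aeval β (minpoly ℚ α) = 0 → ‖β‖ = 1) :
    ∃ k : ℕ, 0 < k ∧ α ^ k = 1 := by
  have hQint : IsIntegral ℚ α := hint.tower_top
  let K := IntermediateField.adjoin ℚ ({α} : Set ℂ)
  haveI : FiniteDimensional ℚ K := IntermediateField.adjoin.finiteDimensional hQint
  haveI : NumberField K := ⟨⟩
  set x : K := IntermediateField.AdjoinSimple.gen ℚ α with hx
  have hmapx : algebraMap K ℂ x = α := IntermediateField.AdjoinSimple.algebraMap_gen ℚ α
  have hminx : minpoly ℚ x = minpoly ℚ α := by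
    rw [← hmapx, minpoly.algebraMap_eq (algebraMap K ℂ).injective]
  have hxint : IsIntegral ℤ x := by
    refine ⟨minpoly ℤ α, minpoly.monic hint, ?_⟩
    have : algebraMap K ℂ (Polynomial.aeval x (minpoly ℤ α)) = 0 := by
      rw [← Polynomial.aeval_algebraMap_apply, hmapx]
      exact minpoly.aeval ℤ α
    exact (map_eq_zero_iff _ (algebraMap K ℂ).injective).1 this
  have hnorm : ∀ φ : K →+* ℂ, ‖φ x‖ = 1 := by
    intro φ
    have : Polynomial.aeval (φ x) (minpoly ℚ x) = 0 := by
      rw [show φ x = φ.toRatAlgHom x from rfl, Polynomial.aeval_algHom_apply,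
        minpoly.aeval, map_zero]
    rw [hminx] at this
    exact h (φ x) this
  obtain ⟨k, hk, hxk⟩ := NumberField.Embeddings.pow_eq_one_of_norm_eq_one K ℂ hxint hnorm
  refine ⟨k, hk, ?_⟩
  rw [← hmapx, ← map_pow, hxk, map_one]

theorem stmt_6 (n : ℕ) (hn : 0 < n) :
    ∃ ε : ℝ, 0 < ε ∧
      ∀ α : ℂ, IsIntegral ℤ α → (minpoly ℚ α).natDegree = n →
        (∀ α' : ℂ, Polynomial.aeval α' (minpoly ℚ α) = 0 →
          1 - ε < ‖α'‖ ∧ ‖α'‖ < 1 + ε) →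
        ∃ k : ℕ, 0 < k ∧ α ^ k = 1 := by
  classical
  obtain T := (finS n).toFinset
  set T : Finset ℂ := (finS n).toFinset with hT
  set F : Finset ℝ := T.biUnion (fun α =>
    (((minpoly ℚ α).aroots ℂ).toFinset.image (fun β => |‖β‖ - 1|)).filter
      (fun x => 0 < x)) with hF
  set F' : Finset ℝ := insert (1/2 : ℝ) F with hF'
  have hne : F'.Nonempty := ⟨1/2, Finset.mem_insert_self _ _⟩
  refine ⟨F'.min' hne, ?_, ?_⟩
  · have hmem := F'.min'_mem hne
    rcases Finset.mem_insert.1 hmem with h | h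
    · rw [h]; norm_num
    · simp only [hF, Finset.mem_biUnion, Finset.mem_filter] at h
      obtain ⟨a, _, _, hpos⟩ := h
      exact hpos
  · intro α hint hdeg hband
    set ε := F'.min' hne with hε
    have hεhalf : ε ≤ 1/2 := Finset.min'_le _ _ (Finset.mem_insert_self _ _)
    have hαT : α ∈ T := by
      rw [hT, Set.Finite.mem_toFinset]
      refine ⟨hint, le_of_eq hdeg, fun β hβ => ?_⟩
      have := (hband β hβ).2
      linarith
    by_contra hru
    obtain ⟨β, hβroot, hβne⟩ : ∃ β : ℂ, Polynomial.aeval β (minpoly ℚ α) = 0 ∧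
        ‖β‖ ≠ 1 := by
      by_contra hall
      push_neg at hall
      exact hru (kron α hint fun β hβ => hall β hβ)
    have hQint : IsIntegral ℚ α := hint.tower_top
    have hmemF : |‖β‖ - 1| ∈ F := by
      rw [hF]
      refine Finset.mem_biUnion.2 ⟨α, hαT, ?_⟩
      refine Finset.mem_filter.2 ⟨Finset.mem_image.2 ⟨β, ?_, rfl⟩, ?_⟩
      · rw [Multiset.mem_toFinset, Polynomial.mem_aroots]
        exact ⟨minpoly.ne_zero hQint, hβroot⟩
      · rcases (abs_pos.2 (sub_ne_zero.2 hβne)) with h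
        exact h
    have hεle : ε ≤ |‖β‖ - 1| :=
      Finset.min'_le _ _ (Finset.mem_insert_of_mem hmemF)
    obtain ⟨h1, h2⟩ := hband β hβroot
    have hlt : |‖β‖ - 1| < ε := abs_sub_lt_iff.2 ⟨by linarith, by linarith⟩
    linarith
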